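/- Let X be a set and let (H, e_H, ⋈) with j : F_X → H be a universal D-envelope of the pointed partially ordered abelian group (F_X, ē). Then j is an order-embedding: j is injective, and j(x) ≤ j(y) in H if and only if x ≤ y in F_X. -/

import Mathlib

/-- An interpolator on a partially ordered abelian group. -/
def IsInterpolator {H : Type*} [AddCommGroup H] [PartialOrder H] [IsOrderedAddMonoid H] (ι : H → H → H → H → H) : Prop :=
  (∀ x x' y y', ι x x' y y' = ι x' x y y') ∧
  (∀ x x' y y', ι x x' y y' = ι x x' y' y) ∧
  (∀ x x' y y', x ≤ y → x ≤ y' → x' ≤ y → x' ≤ y' →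
    (x ≤ ι x x' y y' ∧ x' ≤ ι x x' y y' ∧ ι x x' y y' ≤ y ∧ ι x x' y y' ≤ y'))

/-- A D-structure: an unperforated partially ordered abelian group with a distinguished
positive element `e` such that `0 ≤ x` and `3x ≤ e` imply `x = 0`, and an interpolator. -/
def IsDStructure {H : Type*} [AddCommGroup H] [PartialOrder H] [IsOrderedAddMonoid H] (e : H) (ι : H → H → H → H → H) : Prop :=
  (∀ (m : ℕ) (x : H), 0 < m → 0 ≤ m • x → 0 ≤ x) ∧ 0 ≤ e ∧
  (∀ x : H, 0 ≤ x → 3 • x ≤ e → x = 0) ∧ IsInterpolator ι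

/-- A D-morphism between D-structures. -/
def IsDMorphism {H K : Type*} [AddCommGroup H] [PartialOrder H] [IsOrderedAddMonoid H] [AddCommGroup K] [PartialOrder K] [IsOrderedAddMonoid K]
    (eH : H) (ιH : H → H → H → H → H) (eK : K) (ιK : K → K → K → K → K)
    (h : H →+ K) : Prop :=
  Monotone h ∧ h eH = eK ∧
  ∀ x x' y y', h (ιH x x' y y') = ιK (h x) (h x') (h y) (h y')

/-- A universal D-envelope of a pointed partially ordered abelian group `(G, eG)`. -/
def IsUniversalDEnvelope {G H : Type*} [AddCommGroup G] [PartialOrder G] [IsOrderedAddMonoid G] [AddCommGroup H] [PartialOrder H] [IsOrderedAddMonoid H]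
    (eG : G) (eH : H) (bow : H → H → H → H → H) (j : G →+ H) : Prop :=
  IsDStructure eH bow ∧ Monotone j ∧ j eG = eH ∧
  ∀ (K : Type*) [AddCommGroup K] [PartialOrder K] [IsOrderedAddMonoid K], ∀ (eK : K) (ι : K → K → K → K → K),
    IsDStructure eK ι → ∀ (f : G →+ K), Monotone f → f eG = eK →
    ∃! h : H →+ K, IsDMorphism eH bow eK ι h ∧ ∀ g, h (j g) = f g

/-- The constant function `1` on the powerset of `X`. -/
def eBar (X : Type*) : Set X → ℤ := fun _ => 1

/-- The characteristic function of `{Y ⊆ X : ξ ∈ Y}`. -/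
noncomputable def aBar {X : Type*} (ξ : X) : Set X → ℤ :=
  Set.indicator {Y : Set X | ξ ∈ Y} fun _ => 1

/-- The subgroup of `Set X → ℤ` generated by `ē` and the `ā_ξ`, ordered componentwise. -/
noncomputable def FX (X : Type*) : AddSubgroup (Set X → ℤ) :=
  AddSubgroup.closure ({eBar X} ∪ Set.range (aBar (X := X)))

/-- `ē` as an element of `F_X`. -/
noncomputable def eElem (X : Type*) : FX X :=
  ⟨eBar X, AddSubgroup.subset_closure (Set.mem_union_left _ rfl)⟩

/-- `ā_ξ` as an element of `F_X`. -/
noncomputable def aElem {X : Type*} (ξ : X) : FX X :=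
  ⟨aBar ξ, AddSubgroup.subset_closure (Set.mem_union_right _ ⟨ξ, rfl⟩)⟩

universe u v

instance {α : Type*} [AddCommGroup α] [PartialOrder α] [IsOrderedAddMonoid α] : IsOrderedAddMonoid (ULift α) where
  add_le_add_left := fun _ _ h c => add_le_add (α := α) h (le_refl c.down)

/-- `ULift ℤ` with `1` and pointwise-sup-of-the-lower-pair is a D-structure. -/
theorem isDStructure_uliftInt :
    IsDStructure (ULift.up (1 : ℤ))
      (fun a b _ _ => (ULift.up (a.down ⊔ b.down) : ULift.{u} ℤ)) := by
  have hd : ∀ (m : ℕ) (x : ULift.{u} ℤ), (m • x).down = m • x.down := fun m x =>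
    map_nsmul (AddEquiv.ulift (α := ℤ)).toAddMonoidHom m x
  refine ⟨?_, ?_, ?_, ?_, ?_, ?_⟩
  · intro m x hm hx
    have h : (0 : ℤ) ≤ m • x.down := by rw [← hd]; exact hx
    show (0 : ℤ) ≤ x.down
    simp only [nsmul_eq_mul] at h
    nlinarith [Int.natCast_pos.mpr hm]
  · exact (zero_le_one : (0 : ℤ) ≤ 1)
  · intro x hx h3
    have h : (3 : ℕ) • x.down ≤ 1 := by rw [← hd]; exact h3
    have h0 : (0 : ℤ) ≤ x.down := hx
    simp only [nsmul_eq_mul] at h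
    have : x.down = 0 := by omega
    exact ULift.ext x 0 this
  · intro x x' y y'; simp [sup_comm]
  · intro _ _ _ _; rfl
  · intro x x' y y' h1 h2 h3 h4
    exact ⟨le_sup_left (α := ℤ), le_sup_right (α := ℤ),
      sup_le (α := ℤ) h1 h3, sup_le (α := ℤ) h2 h4⟩

/-- Evaluation of an element of `F_X` at a subset `s`, landing in `ULift ℤ`. -/
noncomputable def evalHom {X : Type u} (s : Set X) : FX X →+ ULift.{v} ℤ :=
  (AddEquiv.ulift.symm.toAddMonoidHom).comp
    ((Pi.evalAddMonoidHom (fun _ : Set X => ℤ) s).comp (FX X).subtype)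

theorem evalHom_apply {X : Type u} (s : Set X) (x : FX X) :
    (evalHom.{u, v} s x).down = (x : Set X → ℤ) s := rfl

/-- **Lemma 3.5.** The canonical map `j : F_X → H` into the universal D-envelope of
`(F_X, ē)` is an order-embedding. -/
theorem envelope_of_FX_orderEmbedding {X : Type u} {H : Type v} [AddCommGroup H] [PartialOrder H] [IsOrderedAddMonoid H]
    (eH : H) (bow : H → H → H → H → H) (j : FX X →+ H)
    (henv : IsUniversalDEnvelope (eElem X) eH bow j) :
    Function.Injective j ∧ ∀ x y : FX X, j x ≤ j y ↔ x ≤ y := by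
  obtain ⟨_, hjmono, _, huniv⟩ := henv
  have key : ∀ x y : FX X, j x ≤ j y ↔ x ≤ y := by
    intro x y
    constructor
    · intro hle
      show (x : Set X → ℤ) ≤ (y : Set X → ℤ)
      intro s
      obtain ⟨h, ⟨⟨hmono, _, _⟩, hcomm⟩, _⟩ :=
        huniv (ULift ℤ) (ULift.up (1 : ℤ))
          (fun a b _ _ => ULift.up (a.down ⊔ b.down))
          isDStructure_uliftInt (evalHom s)
          (fun a b hab => (hab s : (evalHom s a).down ≤ (evalHom s b).down))
          rfl
      have h1 := hmono hle
      rw [hcomm x, hcomm y] at h1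
      exact h1
    · exact fun hle => hjmono hle
  refine ⟨fun x y hxy => ?_, key⟩
  exact le_antisymm ((key x y).mp hxy.le) ((key y x).mp hxy.ge)
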